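/- Let γ > 1 and v* > 0. There exist constants C > 0 and δ* > 0 such that for any δ ∈ (0, δ*) and any v, w > 0 satisfying |p(v) − p(w)| < δ and |p(w) − p(v*)| < δ, one has p(v|w) ≤ ( (γ+1)/(2γ) · 1/p(w) + C δ ) (p(v) − p(w))². -/

import Mathlib

open MeasureTheory Real Set

/-- Pressure `p(v) = v^(-γ)`. -/
noncomputable def pres (γ v : ℝ) : ℝ := v ^ (-γ)

/-- Relative pressure `p(v|w) = p(v) - p(w) - p'(w)(v-w)`, with `p'(w) = -γ w^(-γ-1)`. -/
noncomputable def prel (γ v w : ℝ) : ℝ := pres γ v - pres γ w + γ * w ^ (-γ - 1) * (v - w)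

private lemma mono_aux {a b : ℝ} {f f' : ℝ → ℝ} (hab : a ≤ b)
    (hf : ∀ x ∈ Icc a b, HasDerivAt f (f' x) x)
    (h0 : ∀ x ∈ Ioo a b, 0 ≤ f' x) : f a ≤ f b := by
  have hmono : MonotoneOn f (Icc a b) := by
    apply monotoneOn_of_hasDerivWithinAt_nonneg (f' := f') (convex_Icc a b)
    · exact fun x hx => (hf x hx).continuousAt.continuousWithinAt
    · intro x hx
      rw [interior_Icc] at hx
      exact (hf x (Ioo_subset_Icc_self hx)).hasDerivWithinAt
    · intro x hx
      rw [interior_Icc] at hx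
      exact h0 x hx
  exact hmono (left_mem_Icc.2 hab) (right_mem_Icc.2 hab) hab

set_option maxHeartbeats 4000000 in
/-- Lemma A.3 (estimate (A.5)): sharp local quadratic bound for the relative pressure. -/
theorem relative_pressure_local_bound (γ vstar : ℝ) (hγ : 1 < γ) (hvstar : 0 < vstar) :
    ∃ C δstar : ℝ, 0 < C ∧ 0 < δstar ∧
      ∀ δ : ℝ, 0 < δ → δ < δstar →
      ∀ v w : ℝ, 0 < v → 0 < w →
        |pres γ v - pres γ w| < δ → |pres γ w - pres γ vstar| < δ →
        prel γ v w ≤ ((γ + 1) / (2 * γ) * (1 / pres γ w) + C * δ) *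
          (pres γ v - pres γ w) ^ 2 := by
  have hγ0 : (0:ℝ) < γ := by linarith
  set P := vstar ^ (-γ) with hPdef
  have hP0 : 0 < P := Real.rpow_pos_of_pos hvstar _
  have hP2 : (0:ℝ) < P ^ 2 := pow_pos hP0 2
  refine ⟨20 / P ^ 2, P / 4, div_pos (by norm_num) hP2, by linarith, ?_⟩
  intro δ hδ0 hδP v w hv hw hvw hwstar
  simp only [pres, prel] at hvw hwstar ⊢
  rw [show vstar ^ (-γ) = P from rfl] at hwstar
  set q := v ^ (-γ) with hqdef
  set r := w ^ (-γ) with hrdef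
  have hq0 : 0 < q := Real.rpow_pos_of_pos hv _
  have hr0 : 0 < r := Real.rpow_pos_of_pos hw _
  have hrlo : 3 * P / 4 < r := by
    have := abs_lt.1 hwstar; linarith [this.1]
  have hrhi : r < 5 * P / 4 := by
    have := abs_lt.1 hwstar; linarith [this.2]
  have hqr : |q - r| < δ := hvw
  set K := (γ + 1) / (2 * γ) * (1 / r) + 20 / P ^ 2 * δ with hKdef
  have hγne : γ ≠ 0 := ne_of_gt hγ0
  have hγp : (0:ℝ) < 1 / γ := by positivity
  have hγ1 : 1 / γ ≤ 1 := by
    rw [div_le_one hγ0]; linarith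
  have hvq : q ^ (-1 / γ) = v := by
    rw [hqdef, ← Real.rpow_mul hv.le, show -γ * (-1 / γ) = 1 by field_simp]
    exact Real.rpow_one v
  have hwr : r ^ (-1 / γ) = w := by
    rw [hrdef, ← Real.rpow_mul hw.le, show -γ * (-1 / γ) = 1 by field_simp]
    exact Real.rpow_one w
  have hwr2 : w ^ (-γ - 1) = r ^ (1 + 1 / γ) := by
    rw [hrdef, ← Real.rpow_mul hw.le]
    congr 1
    field_simp
    ring
  set A := w ^ (-γ - 1) with hAdef
  have hA0 : 0 < A := Real.rpow_pos_of_pos hw _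
  set F : ℝ → ℝ := fun x => x - r + γ * A * (x ^ (-1 / γ) - w) - K * (x - r) ^ 2 with hFdef
  set g : ℝ → ℝ := fun x => A * x ^ (-1 / γ - 1) - 1 + 2 * K * (x - r) with hgdef
  have hc : ∀ X : ℝ, γ * A * (-1 / γ * X) = -(A * X) := by
    intro X
    have h1 : γ * A * (-1 / γ * X) = -(γ * γ⁻¹ * (A * X)) := by ring
    rw [h1, mul_inv_cancel₀ hγne, one_mul]
  have hF' : ∀ x : ℝ, 0 < x → HasDerivAt F (-(g x)) x := by
    intro x hx
    have h1 : HasDerivAt (fun y : ℝ => y ^ (-1 / γ)) (-1 / γ * x ^ (-1 / γ - 1)) x :=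
      Real.hasDerivAt_rpow_const (Or.inl hx.ne')
    have h2 : HasDerivAt (fun y : ℝ => y - r + γ * A * (y ^ (-1 / γ) - w))
        (1 + γ * A * (-1 / γ * x ^ (-1 / γ - 1))) x := by
      have := ((hasDerivAt_id x).sub_const r).add ((h1.sub_const w).const_mul (γ * A))
      exact this
    have h3 : HasDerivAt (fun y : ℝ => K * (y - r) ^ 2) (K * (2 * (x - r))) x := by
      have := (((hasDerivAt_id x).sub_const r).pow 2).const_mul K
      simpa using this
    have h4 := h2.sub h3
    rw [hFdef, hgdef]
    refine h4.congr_deriv ?_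
    rw [hc]
    ring
  have hg' : ∀ x : ℝ, 0 < x →
      HasDerivAt g (2 * K - (1 / γ + 1) * (A * x ^ (-1 / γ - 2))) x := by
    intro x hx
    have h1 : HasDerivAt (fun y : ℝ => y ^ (-1 / γ - 1)) ((-1 / γ - 1) * x ^ (-1 / γ - 1 - 1)) x :=
      Real.hasDerivAt_rpow_const (Or.inl hx.ne')
    have h2 := ((h1.const_mul A).sub_const 1).add
      (((hasDerivAt_id x).sub_const r).const_mul (2 * K))
    rw [hgdef]
    refine h2.congr_deriv ?_
    rw [show -1 / γ - 1 - 1 = -1 / γ - 2 by ring]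
    ring
  have hAr : A * r ^ (-1 / γ - 1) = 1 := by
    rw [hwr2, ← Real.rpow_add hr0, show 1 + 1 / γ + (-1 / γ - 1) = 0 by ring, Real.rpow_zero]
  have hgr : g r = 0 := by
    simp only [hgdef, hAr]
    ring
  have hPlo : ∀ t : ℝ, |t - r| ≤ |q - r| → P / 2 < t := by
    intro t ht
    have := abs_lt.1 (lt_of_le_of_lt ht hqr)
    linarith [this.1]
  -- key estimate : derivative of g is nonnegative near r
  have hkey : ∀ t : ℝ, |t - r| ≤ |q - r| →
      (1 / γ + 1) * (A * t ^ (-1 / γ - 2)) ≤ 2 * K := by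
    intro t ht
    have htP : P / 2 < t := hPlo t ht
    have ht0 : 0 < t := lt_trans (by linarith) htP
    have h2K : 2 * K = (1 / γ + 1) * (1 / r) + 40 / P ^ 2 * δ := by
      rw [hKdef]; field_simp; ring
    have hCnn : (0:ℝ) ≤ 40 / P ^ 2 * δ :=
      mul_nonneg (le_of_lt (div_pos (by norm_num) hP2)) hδ0.le
    rcases le_or_gt r t with hcase | hcase
    · have h1 : t ^ (-1 / γ - 2) ≤ r ^ (-1 / γ - 2) :=
        Real.rpow_le_rpow_of_nonpos hr0 hcase (by rw [show -1 / γ - 2 = -(1 / γ) - 2 by ring]; linarith)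
      have h2 : r ^ (1 + 1 / γ) * r ^ (-1 / γ - 2) = 1 / r := by
        rw [← Real.rpow_add hr0, show 1 + 1 / γ + (-1 / γ - 2) = -1 by ring,
          Real.rpow_neg_one, one_div]
      have hrp : (0:ℝ) < r ^ (1 + 1 / γ) := Real.rpow_pos_of_pos hr0 _
      have h3 : A * t ^ (-1 / γ - 2) ≤ 1 / r := by
        rw [hwr2, ← h2]
        exact mul_le_mul_of_nonneg_left h1 hrp.le
      have h4 : (1 / γ + 1) * (A * t ^ (-1 / γ - 2)) ≤ (1 / γ + 1) * (1 / r) :=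
        mul_le_mul_of_nonneg_left h3 (by linarith)
      rw [h2K]
      linarith
    · -- t < r : use s = r/t
      set s := r / t with hsdef
      have hs1 : 1 < s := (one_lt_div ht0).2 hcase
      have hst : s * t = r := by
        rw [hsdef]; field_simp
      have hsd : (s - 1) * P ≤ 2 * δ := by
        have h1 : r - t < δ := by
          have := abs_lt.1 (lt_of_le_of_lt ht hqr); linarith [this.2]
        have h2 : (s - 1) * t = r - t := by rw [← hst]; ring
        have h3 : (s - 1) * (P / 2) ≤ (s - 1) * t :=
          mul_le_mul_of_nonneg_left htP.le (by linarith)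
        nlinarith
      have hs32 : s ≤ 3 / 2 := by nlinarith
      have hr2 : r ^ (1 / γ + 2) = r * r ^ (1 + 1 / γ) := by
        rw [show 1 / γ + 2 = 1 + (1 + 1 / γ) by ring, Real.rpow_add hr0, Real.rpow_one]
      have htne : t ^ (1 / γ + 2) ≠ 0 := ne_of_gt (Real.rpow_pos_of_pos ht0 _)
      have hts : A * t ^ (-1 / γ - 2) = 1 / r * s ^ (1 / γ + 2) := by
        rw [hwr2, hsdef, Real.div_rpow hr0.le ht0.le,
          show -1 / γ - 2 = -(1 / γ + 2) by ring, Real.rpow_neg ht0.le, hr2]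
        field_simp
      have hs3 : s ^ (1 / γ + 2) ≤ s ^ (3:ℕ) := by
        have h5 := Real.rpow_le_rpow_of_exponent_le hs1.le (show 1 / γ + 2 ≤ 3 by linarith)
        calc s ^ (1 / γ + 2) ≤ s ^ (3:ℝ) := h5
          _ = s ^ (3:ℕ) := by rw [← Real.rpow_natCast s 3]; norm_num
      have hcube : s ^ (3:ℕ) ≤ 1 + 5 * (s - 1) := by
        nlinarith [mul_nonneg (by linarith : (0:ℝ) ≤ s - 1)
          (by nlinarith : (0:ℝ) ≤ 4 - s ^ 2 - s)]
      have hx1 : s ^ (1 / γ + 2) - 1 ≤ 5 * (s - 1) := by linarith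
      have hrinv : (0:ℝ) < 1 / r := by positivity
      have hrP : 1 / r ≤ 2 / P := by
        rw [div_le_div_iff₀ hr0 hP0]; linarith
      have main : (1 / γ + 1) * (1 / r) * (s ^ (1 / γ + 2) - 1) ≤ 40 / P ^ 2 * δ := by
        rcases le_or_gt (s ^ (1 / γ + 2)) 1 with hle | hgt
        · have hnp : (1 / γ + 1) * (1 / r) * (s ^ (1 / γ + 2) - 1) ≤ 0 :=
            mul_nonpos_of_nonneg_of_nonpos
              (mul_nonneg (by linarith) hrinv.le) (by linarith)
          linarith
        · have hXP : (s ^ (1 / γ + 2) - 1) * P ≤ 10 * δ := by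
            have h6 := mul_le_mul_of_nonneg_right hx1 hP0.le
            nlinarith
          have hchain : (1 / γ + 1) * (1 / r) * (s ^ (1 / γ + 2) - 1)
              ≤ 2 * (2 / P) * (s ^ (1 / γ + 2) - 1) := by
            apply mul_le_mul_of_nonneg_right _ (by linarith)
            exact mul_le_mul (by linarith) hrP hrinv.le (by norm_num)
          have hfin : 2 * (2 / P) * (s ^ (1 / γ + 2) - 1) ≤ 40 / P ^ 2 * δ := by
            rw [show 40 / P ^ 2 * δ = 40 * δ / P ^ 2 by ring, le_div_iff₀ hP2]
            have h7 : 2 * (2 / P) * (s ^ (1 / γ + 2) - 1) * P ^ 2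
                = 4 * ((s ^ (1 / γ + 2) - 1) * P) := by
              field_simp
              ring
            rw [h7]
            linarith
          linarith
      rw [h2K, hts]
      nlinarith [main]
  -- assembling via monotonicity
  have hFr : F r = 0 := by
    simp only [hFdef, hwr]
    ring
  have hgle : F q ≤ 0 := by
    rcases le_total q r with hqr' | hqr'
    · have habs : |q - r| = r - q := by
        rw [abs_of_nonpos (by linarith)]; ring
      have hFF : F q ≤ F r := by
        apply mono_aux (f' := fun x => -(g x)) hqr'
        · intro x hx
          exact hF' x (lt_of_lt_of_le hq0 hx.1)
        · intro x hx
          have hgx : g x ≤ g r := by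
            apply mono_aux
              (f' := fun y => 2 * K - (1 / γ + 1) * (A * y ^ (-1 / γ - 2))) hx.2.le
            · intro y hy
              exact hg' y (lt_of_lt_of_le (lt_trans hq0 hx.1) hy.1)
            · intro y hy
              have hyb : |y - r| ≤ |q - r| := by
                rw [habs, abs_of_nonpos (by linarith [hy.2] : y - r ≤ 0)]
                have := hx.1
                have := hy.1
                linarith
              have := hkey y hyb
              linarith
          rw [hgr] at hgx
          linarith
      linarith
    · have habs : |q - r| = q - r := abs_of_nonneg (by linarith)
      have hFF : -F r ≤ -F q := by
        apply mono_aux (f := fun x => -F x) (f' := fun x => g x) hqr'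
        · intro x hx
          exact (by simpa using (hF' x (lt_of_lt_of_le hr0 hx.1)).neg : HasDerivAt (-F) (g x) x)
        · intro x hx
          have hgx : g r ≤ g x := by
            apply mono_aux
              (f' := fun y => 2 * K - (1 / γ + 1) * (A * y ^ (-1 / γ - 2))) hx.1.le
            · intro y hy
              exact hg' y (lt_of_lt_of_le hr0 hy.1)
            · intro y hy
              have hyb : |y - r| ≤ |q - r| := by
                rw [habs, abs_of_nonneg (by linarith [hy.1] : 0 ≤ y - r)]
                have := hx.2
                have := hy.2
                linarith
              have := hkey y hyb
              linarith
          rw [hgr] at hgx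
          linarith
      linarith
  have hFq : F q = q - r + γ * A * (v - w) - K * (q - r) ^ 2 := by
    simp only [hFdef, hvq]
  linarith [hgle, hFq]
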